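/- Let σ : K → V be an injective R-linear map between finite free R-modules of ranks k and N respectively, and let L := V/σ(K). Then the support of the cokernel of the dual map σ^∨ : V^∨ → K^∨ equals the degeneracy locus { p ∈ Spec R : dim_{κ(p)}(L ⊗_R κ(p)) > N − k }, where κ(p) is the residue field of R_p. -/

import Mathlib

open TensorProduct Matrix

section aux

lemma nontrivial_congr_of_equiv {α β : Type*} (e : α ≃ β) : Nontrivial α ↔ Nontrivial β := by
  rw [← not_subsingleton_iff_nontrivial, ← not_subsingleton_iff_nontrivial,
    e.subsingleton_congr]

/-- CommRing version of `LinearMap.toMatrix_transpose`. -/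
lemma toMatrix_dualMap_aux {R M₁ M₂ ι₁ ι₂ : Type*} [CommRing R]
    [AddCommGroup M₁] [Module R M₁] [AddCommGroup M₂] [Module R M₂]
    [Fintype ι₁] [Fintype ι₂] [DecidableEq ι₁] [DecidableEq ι₂]
    (b₁ : Module.Basis ι₁ R M₁) (b₂ : Module.Basis ι₂ R M₂) (u : M₁ →ₗ[R] M₂) :
    LinearMap.toMatrix b₂.dualBasis b₁.dualBasis u.dualMap =
      (LinearMap.toMatrix b₁ b₂ u)ᵀ := by
  ext i j
  simp [LinearMap.toMatrix_apply, Module.Basis.dualBasis_repr, Module.Basis.dualBasis_apply]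


/-- Surjectivity of a linear map between finite-dimensional spaces in terms of the rank of its
matrix. -/
lemma surjective_iff_rank_eq {F M₁ M₂ : Type*} [Field F] [AddCommMonoid M₁] [Module F M₁]
    [AddCommMonoid M₂] [Module F M₂] {n m : ℕ}
    (b₁ : Module.Basis (Fin n) F M₁) (b₂ : Module.Basis (Fin m) F M₂) (f : M₁ →ₗ[F] M₂) :
    Function.Surjective f ↔ (LinearMap.toMatrix b₁ b₂ f).rank = m := by
  classical
  have hf : ⇑f = ⇑b₂.equivFun.symm.toEquiv ∘
      ⇑(LinearMap.toMatrix b₁ b₂ f).mulVecLin ∘ ⇑b₁.equivFun.toEquiv := by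
    funext x
    apply b₂.equivFun.injective
    simp only [Function.comp_apply, Matrix.mulVecLin_apply, LinearEquiv.coe_toEquiv,
      LinearEquiv.apply_symm_apply]
    ext i
    rw [Module.Basis.equivFun_apply, Module.Basis.equivFun_apply, LinearMap.toMatrix_mulVec_repr]
  rw [hf, Equiv.comp_surjective, Equiv.surjective_comp, ← LinearMap.range_eq_top]
  constructor
  · intro h
    rw [Matrix.rank, h, finrank_top, Module.finrank_fin_fun]
  · intro h
    apply Submodule.eq_top_of_finrank_eq
    rw [show Module.finrank F ↥(LinearMap.range (LinearMap.toMatrix b₁ b₂ f).mulVecLin)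
      = (LinearMap.toMatrix b₁ b₂ f).rank from rfl, h, Module.finrank_fin_fun]

/-- Localization at a prime of a finitely generated cokernel is nontrivial iff the base change
of the map to the residue field is not surjective. -/
lemma aux_loc {R : Type} [CommRing R] {W X : Type} [AddCommGroup W] [Module R W]
    [AddCommGroup X] [Module R X] [Module.Finite R X] (τ : W →ₗ[R] X)
    (A : Type) [CommRing A] [Algebra R A] [IsLocalRing A]
    (p : PrimeSpectrum R) [IsLocalization.AtPrime A p.asIdeal] :
    Nontrivial (LocalizedModule p.asIdeal.primeCompl (X ⧸ LinearMap.range τ)) ↔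
      ¬ Function.Surjective (τ.baseChange (IsLocalRing.ResidueField A)) := by
  set F := IsLocalRing.ResidueField A with hF
  set S := p.asIdeal.primeCompl with hS
  set Q := X ⧸ LinearMap.range τ with hQ
  haveI : Module.Finite R Q :=
    Module.Finite.of_surjective (Submodule.mkQ _) (Submodule.mkQ_surjective _)
  have step1 : Nontrivial (LocalizedModule S Q) ↔ Nontrivial (A ⊗[R] Q) :=
    letI : Module A (LocalizedModule S Q) := LocalizedModule.moduleOfIsLocalization ..
    (nontrivial_congr_of_equiv
      (IsLocalizedModule.isBaseChange S A (LocalizedModule.mkLinearMap S Q)).equiv.toEquiv).symm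
  have step2 : Nontrivial (A ⊗[R] Q) ↔ Nontrivial (F ⊗[A] (A ⊗[R] Q)) := by
    rw [← not_subsingleton_iff_nontrivial, ← not_subsingleton_iff_nontrivial,
      IsLocalRing.subsingleton_tensorProduct (R := A)]
  have step3 : Nontrivial (F ⊗[A] (A ⊗[R] Q)) ↔ Nontrivial (F ⊗[R] Q) :=
    nontrivial_congr_of_equiv
      (TensorProduct.AlgebraTensorModule.cancelBaseChange R A F F Q).toEquiv
  have hexQ : Function.Exact (LinearMap.lTensor F τ)
      (LinearMap.lTensor F (LinearMap.range τ).mkQ) :=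
    lTensor_exact F (LinearMap.exact_map_mkQ_range τ) (Submodule.mkQ_surjective _)
  have hsurjQ : Function.Surjective (LinearMap.lTensor F (LinearMap.range τ).mkQ) :=
    LinearMap.lTensor_surjective F (Submodule.mkQ_surjective _)
  have step4 : Nontrivial (F ⊗[R] Q) ↔
      ¬ Function.Surjective (LinearMap.lTensor F τ) := by
    rw [← nontrivial_congr_of_equiv
      (LinearMap.quotKerEquivOfSurjective _ hsurjQ).toEquiv,
      ← not_subsingleton_iff_nontrivial, Submodule.Quotient.subsingleton_iff,
      LinearMap.exact_iff.mp hexQ, ← LinearMap.range_eq_top]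
  have hbc : ⇑(τ.baseChange F) = ⇑(LinearMap.lTensor F τ) := LinearMap.baseChange_eq_ltensor τ
  rw [step1, step2, step3, step4, hbc]

/-- Over a field, non-surjectivity of the base-changed dual map is equivalent to the
degeneracy-locus inequality. -/
lemma aux_field {R : Type} [CommRing R] [Nontrivial R]
    {K V : Type} [AddCommGroup K] [Module R K] [AddCommGroup V] [Module R V]
    [Module.Free R K] [Module.Finite R K] [Module.Free R V] [Module.Finite R V]
    (k N : ℕ) (hk : Module.finrank R K = k) (hN : Module.finrank R V = N) (hkN : k ≤ N)
    (σ : K →ₗ[R] V) (F : Type) [Field F] [Algebra R F] :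
    (¬ Function.Surjective (σ.dualMap.baseChange F)) ↔
      N - k < Module.finrank F (F ⊗[R] (V ⧸ LinearMap.range σ)) := by
  classical
  set bK := Module.finBasisOfFinrankEq R K hk with hbK
  set bV := Module.finBasisOfFinrankEq R V hN with hbV
  set Mat := LinearMap.toMatrix bK bV σ with hMat
  set φ := algebraMap R F with hφ
  set MatF := Mat.map φ with hMatF
  set r := MatF.rank with hr
  set τ := σ.dualMap with hτ
  -- matrix of the base-changed dual map
  have hmatτ : LinearMap.toMatrix (Algebra.TensorProduct.basis F bV.dualBasis)
      (Algebra.TensorProduct.basis F bK.dualBasis) (τ.baseChange F) = Matᵀ.map φ := by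
    rw [LinearMap.toMatrix_baseChange, hτ, toMatrix_dualMap_aux]
  have step5 : Function.Surjective (τ.baseChange F) ↔ r = k := by
    rw [surjective_iff_rank_eq (Algebra.TensorProduct.basis F bV.dualBasis)
      (Algebra.TensorProduct.basis F bK.dualBasis), hmatτ, hr, hMatF,
      Matrix.transpose_map, Matrix.rank_transpose]
  -- dimension count for F ⊗ L
  have hexL : Function.Exact (σ.baseChange F) ((LinearMap.range σ).mkQ.baseChange F) := by
    rw [show ⇑(σ.baseChange F) = ⇑(LinearMap.lTensor F σ) from
      LinearMap.baseChange_eq_ltensor σ,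
      show ⇑((LinearMap.range σ).mkQ.baseChange F)
        = ⇑(LinearMap.lTensor F (LinearMap.range σ).mkQ) from
      LinearMap.baseChange_eq_ltensor _]
    exact lTensor_exact F (LinearMap.exact_map_mkQ_range σ) (Submodule.mkQ_surjective _)
  have hsurjL : Function.Surjective ((LinearMap.range σ).mkQ.baseChange F) := by
    rw [show ⇑((LinearMap.range σ).mkQ.baseChange F)
        = ⇑(LinearMap.lTensor F (LinearMap.range σ).mkQ) from
      LinearMap.baseChange_eq_ltensor _]
    exact LinearMap.lTensor_surjective F (Submodule.mkQ_surjective _)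
  haveI : Module.Finite F (F ⊗[R] V) :=
    Module.Finite.of_basis (Algebra.TensorProduct.basis F bV)
  have hdimV : Module.finrank F (F ⊗[R] V) = N := by
    rw [Module.finrank_eq_card_basis (Algebra.TensorProduct.basis F bV), Fintype.card_fin]
  have hrankσ : Module.finrank F (LinearMap.range (σ.baseChange F)) = r := by
    have hmatσ : LinearMap.toMatrix (Algebra.TensorProduct.basis F bK)
        (Algebra.TensorProduct.basis F bV) (σ.baseChange F) = MatF := by
      rw [LinearMap.toMatrix_baseChange, hMatF, hMat]
    have : Matrix.toLin (Algebra.TensorProduct.basis F bK)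
        (Algebra.TensorProduct.basis F bV) MatF = σ.baseChange F := by
      rw [← hmatσ, Matrix.toLin_toMatrix]
    rw [← this, ← Matrix.rank_eq_finrank_range_toLin, hr]
  have hdimL : Module.finrank F (F ⊗[R] (V ⧸ LinearMap.range σ)) + r = N := by
    rw [← LinearEquiv.finrank_eq (LinearMap.quotKerEquivOfSurjective _ hsurjL),
      LinearMap.exact_iff.mp hexL, ← hrankσ, ← hdimV]
    exact Submodule.finrank_quotient_add_finrank _
  have hrk : r ≤ k := by
    have := MatF.rank_le_width
    simpa using this
  rw [step5]
  omega

end aux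

/-- Let `σ : K → V` be an injective `R`-linear map between finite free
`R`-modules of ranks `k` and `N`, and `L := V/σ(K)`. Then the support of the cokernel of
the dual map `σ^∨ : V^∨ → K^∨` equals the degeneracy locus
`{ p ∈ Spec R : dim_{κ(p)}(L ⊗_R κ(p)) > N − k }`. -/
theorem support_cokernel_dual_eq_degeneracy_locus
    {R : Type} [CommRing R]
    {K V : Type} [AddCommGroup K] [Module R K] [AddCommGroup V] [Module R V]
    [Module.Free R K] [Module.Finite R K] [Module.Free R V] [Module.Finite R V]
    (k N : ℕ) (hk : Module.finrank R K = k) (hN : Module.finrank R V = N)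
    (σ : K →ₗ[R] V) (hσ : Function.Injective σ) :
    Module.support R ((Module.Dual R K) ⧸ LinearMap.range σ.dualMap) =
      { p : PrimeSpectrum R |
        N - k < Module.finrank (IsLocalRing.ResidueField (Localization.AtPrime p.asIdeal))
          ((IsLocalRing.ResidueField (Localization.AtPrime p.asIdeal)) ⊗[R]
            (V ⧸ LinearMap.range σ)) } := by
  rcases subsingleton_or_nontrivial R with hR | hR
  · haveI : IsEmpty (PrimeSpectrum R) := inferInstance
    ext p
    exact (this.false p).elim
  have hkN : k ≤ N := by
    rw [← hk, ← hN]
    exact LinearMap.finrank_le_finrank_of_injective hσ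
  ext p
  simp only [Set.mem_setOf_eq, Module.mem_support_iff]
  rw [aux_loc σ.dualMap (Localization.AtPrime p.asIdeal) p,
    aux_field k N hk hN hkN σ]
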